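/- Fix n ≥ 1, T > 0, and x₀ ∈ ℝⁿ. Let g, h : ℝⁿ → ℝⁿ be twice continuously differentiable with globally Lipschitz continuous values (g is globally Lipschitz and h is globally Lipschitz), let r_g, r_h : ℝⁿ → ℝ and q : ℝⁿ → ℝ be continuously differentiable. Let x̄ : ℝ → ℝⁿ solve x̄(0) = x₀ and x̄'(t) = g(x̄(t)) for all t ∈ [0,T]; let λ : ℝ → ℝⁿ solve the adjoint system λ(T) = ∇q(x̄(T)) and λ'(t) = −(Dg(x̄(t)))ᵀ λ(t) − ∇r_g(x̄(t)) for all t ∈ [0,T], where Dg(x̄(t))ᵀ is the adjoint (transpose) of the Fréchet derivative of g at x̄(t); and for each ε ∈ (0,1] let x_ε : ℝ → ℝⁿ solve the ε-variational system x_ε(0) = x₀ and x_ε'(t) = (1−ε) g(x_ε(t)) + ε h(x_ε(t)) for all t ∈ [0,T]. Define J_ε := ∫₀ᵀ [ (1−ε) r_g(x_ε(t)) + ε r_h(x_ε(t)) ] dt + q(x_ε(T)) and J₀ := ∫₀ᵀ r_g(x̄(t)) dt + q(x̄(T)). Then the one-sided limit lim_{ε → 0⁺} (J_ε − J₀)/ε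 exists and equals ∫₀ᵀ [ ⟨ h(x̄(t)) − g(x̄(t)), λ(t) ⟩ + r_h(x̄(t)) − r_g(x̄(t)) ] dt. -/

import Mathlib

open scoped RealInnerProductSpace
open Set Pointwise

set_option maxHeartbeats 4000000 in
/-- Adjoint-based formula for the nonstandard derivative: with nominal
trajectory `x̄` of `x' = g(x)`, adjoint state `lam` solving the adjoint system, and
`x_ε` solving the `ε`-variational system `x' = (1−ε)g(x) + εh(x)`, the one-sided
difference quotient of the convex-combination payoff tends to
`∫₀ᵀ (⟪h(x̄) − g(x̄), lam⟫ + r_h(x̄) − r_g(x̄)) dt` as `ε → 0⁺`. -/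
theorem stmt_8 (n : ℕ) (hn : 1 ≤ n) (T : ℝ) (hT : 0 < T)
    (x₀ : EuclideanSpace ℝ (Fin n))
    (g h : EuclideanSpace ℝ (Fin n) → EuclideanSpace ℝ (Fin n))
    (hg : ContDiff ℝ 2 g) (hh : ContDiff ℝ 2 h)
    (Kg Kh : NNReal) (hgLip : LipschitzWith Kg g) (hhLip : LipschitzWith Kh h)
    (rg rh : EuclideanSpace ℝ (Fin n) → ℝ) (q : EuclideanSpace ℝ (Fin n) → ℝ)
    (hrg : ContDiff ℝ 1 rg) (hrh : ContDiff ℝ 1 rh) (hq : ContDiff ℝ 1 q)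
    (xbar : ℝ → EuclideanSpace ℝ (Fin n))
    (hx0 : xbar 0 = x₀)
    (hxbar : ∀ t ∈ Set.Icc (0 : ℝ) T, HasDerivAt xbar (g (xbar t)) t)
    (lam : ℝ → EuclideanSpace ℝ (Fin n))
    (hlamT : lam T = gradient q (xbar T))
    (hlam : ∀ t ∈ Set.Icc (0 : ℝ) T, HasDerivAt lam
      (-(ContinuousLinearMap.adjoint (fderiv ℝ g (xbar t)) (lam t))
        - gradient rg (xbar t)) t)
    (X : ℝ → ℝ → EuclideanSpace ℝ (Fin n))
    (hX0 : ∀ ε ∈ Set.Ioc (0 : ℝ) 1, X ε 0 = x₀)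
    (hXode : ∀ ε ∈ Set.Ioc (0 : ℝ) 1, ∀ t ∈ Set.Icc (0 : ℝ) T,
      HasDerivAt (X ε) ((1 - ε) • g (X ε t) + ε • h (X ε t)) t)
    (Jeps : ℝ → ℝ)
    (hJeps : ∀ ε ∈ Set.Ioc (0 : ℝ) 1,
      Jeps ε = (∫ t in (0 : ℝ)..T, ((1 - ε) * rg (X ε t) + ε * rh (X ε t)))
        + q (X ε T))
    (J0 : ℝ)
    (hJ0 : J0 = (∫ t in (0 : ℝ)..T, rg (xbar t)) + q (xbar T)) :
    Filter.Tendsto (fun ε : ℝ => (Jeps ε - J0) / ε)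
      (nhdsWithin 0 (Set.Ioi 0))
      (nhds (∫ t in (0 : ℝ)..T,
        (⟪h (xbar t) - g (xbar t), lam t⟫ + (rh (xbar t) - rg (xbar t))))) := by
  have huIcc : Set.uIcc (0:ℝ) T = Set.Icc 0 T := Set.uIcc_of_le hT.le
  -- continuity of the data along trajectories
  have hxbarC : ContinuousOn xbar (Set.Icc 0 T) := fun t ht =>
    (hxbar t ht).continuousAt.continuousWithinAt
  have hlamC : ContinuousOn lam (Set.Icc 0 T) := fun t ht =>
    (hlam t ht).continuousAt.continuousWithinAt
  have hXC : ∀ ε ∈ Set.Ioc (0:ℝ) 1, ContinuousOn (X ε) (Set.Icc 0 T) := fun ε hε t ht =>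
    (hXode ε hε t ht).continuousAt.continuousWithinAt
  -- a bound for h - g along the nominal trajectory
  obtain ⟨M, hMpos, hM⟩ : ∃ M : ℝ, 0 ≤ M ∧
      ∀ t ∈ Set.Icc (0:ℝ) T, ‖h (xbar t) - g (xbar t)‖ ≤ M := by
    obtain ⟨M0, hM0⟩ := isCompact_Icc.exists_bound_of_continuousOn
      ((hh.continuous.comp_continuousOn hxbarC).sub (hg.continuous.comp_continuousOn hxbarC))
    exact ⟨max M0 0, le_max_right _ _, fun t ht => (hM0 t ht).trans (le_max_left _ _)⟩
  -- Grönwall estimate : ‖X ε t - xbar t‖ ≤ ε * C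
  obtain ⟨C, hCpos, key⟩ : ∃ C : ℝ, 0 < C ∧ ∀ ε ∈ Set.Ioc (0:ℝ) 1, ∀ t ∈ Set.Icc (0:ℝ) T,
      ‖X ε t - xbar t‖ ≤ ε * C := by
    set K : ℝ := (Kg : ℝ) + (Kg : ℝ) + (Kh : ℝ) + 1 with hKdef
    have hKpos : 0 < K := by positivity
    have hexp1 : (1:ℝ) ≤ Real.exp (K * T) := by
      rw [← Real.exp_zero]; exact Real.exp_le_exp.2 (by positivity)
    refine ⟨M / K * (Real.exp (K * T) - 1) + 1, ?_, ?_⟩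
    · have h0 : 0 ≤ M / K * (Real.exp (K * T) - 1) :=
        mul_nonneg (div_nonneg hMpos hKpos.le) (by linarith)
      linarith
    intro ε hε t ht
    have hgron : ∀ s ∈ Set.Icc (0:ℝ) T,
        ‖X ε s - xbar s‖ ≤ gronwallBound 0 K (ε * M) (s - 0) := by
      apply norm_le_gronwallBound_of_norm_deriv_right_le
        (f' := fun s => ((1 - ε) • g (X ε s) + ε • h (X ε s)) - g (xbar s))
        (((hXC ε hε).sub hxbarC))
        (fun s hs => (((hXode ε hε s (Set.Ico_subset_Icc_self hs)).sub
          (hxbar s (Set.Ico_subset_Icc_self hs))).hasDerivWithinAt))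
        (by simp [hX0 ε hε, hx0])
      intro s hs
      have hs' : s ∈ Set.Icc (0:ℝ) T := Set.Ico_subset_Icc_self hs
      have halg : ((1 - ε) • g (X ε s) + ε • h (X ε s)) - g (xbar s)
          = (g (X ε s) - g (xbar s)) + ε • ((h (X ε s) - h (xbar s))
              + (h (xbar s) - g (xbar s)) + (g (xbar s) - g (X ε s))) := by
        module
      have h1 : ‖g (X ε s) - g (xbar s)‖ ≤ (Kg : ℝ) * ‖X ε s - xbar s‖ := by
        simpa [dist_eq_norm] using hgLip.dist_le_mul (X ε s) (xbar s)
      have h2 : ‖h (X ε s) - h (xbar s)‖ ≤ (Kh : ℝ) * ‖X ε s - xbar s‖ := by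
        simpa [dist_eq_norm] using hhLip.dist_le_mul (X ε s) (xbar s)
      have h3 : ‖g (xbar s) - g (X ε s)‖ ≤ (Kg : ℝ) * ‖X ε s - xbar s‖ := by
        rw [norm_sub_rev]; exact h1
      have h4 := hM s hs'
      have hnn : 0 ≤ ‖X ε s - xbar s‖ := norm_nonneg _
      calc ‖((1 - ε) • g (X ε s) + ε • h (X ε s)) - g (xbar s)‖
          = ‖(g (X ε s) - g (xbar s)) + ε • ((h (X ε s) - h (xbar s))
              + (h (xbar s) - g (xbar s)) + (g (xbar s) - g (X ε s)))‖ := by rw [halg]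
        _ ≤ ‖g (X ε s) - g (xbar s)‖ + ‖ε • ((h (X ε s) - h (xbar s))
              + (h (xbar s) - g (xbar s)) + (g (xbar s) - g (X ε s)))‖ := norm_add_le _ _
        _ ≤ ‖g (X ε s) - g (xbar s)‖ + ε * (‖h (X ε s) - h (xbar s)‖
              + ‖h (xbar s) - g (xbar s)‖ + ‖g (xbar s) - g (X ε s)‖) := by
            have hsm : ‖ε • ((h (X ε s) - h (xbar s)) + (h (xbar s) - g (xbar s))
                + (g (xbar s) - g (X ε s)))‖ ≤ ε * (‖h (X ε s) - h (xbar s)‖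
                + ‖h (xbar s) - g (xbar s)‖ + ‖g (xbar s) - g (X ε s)‖) := by
              rw [norm_smul, Real.norm_eq_abs, abs_of_pos hε.1]
              exact mul_le_mul_of_nonneg_left
                ((norm_add_le _ _).trans (add_le_add (norm_add_le _ _) le_rfl)) hε.1.le
            linarith
        _ ≤ K * ‖X ε s - xbar s‖ + ε * M := by
            have hε1 := hε.2
            have hε0 := hε.1
            nlinarith [Kg.coe_nonneg, Kh.coe_nonneg,
              mul_le_mul_of_nonneg_left h2 hε0.le,
              mul_le_mul_of_nonneg_left h3 hε0.le,
              mul_le_mul_of_nonneg_left h4 hε0.le,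
              mul_nonneg (mul_nonneg (sub_nonneg.2 hε1) Kh.coe_nonneg) hnn,
              mul_nonneg (mul_nonneg (sub_nonneg.2 hε1) Kg.coe_nonneg) hnn]
    have hb := hgron t ht
    rw [gronwallBound_of_K_ne_0 hKpos.ne'] at hb
    refine hb.trans ?_
    have hte : Real.exp (K * (t - 0)) ≤ Real.exp (K * T) :=
      Real.exp_le_exp.2 (by nlinarith [ht.1, ht.2])
    have hexpt : (1:ℝ) ≤ Real.exp (K * (t - 0)) := by
      rw [← Real.exp_zero]; exact Real.exp_le_exp.2 (by nlinarith [ht.1])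
    have hε0 := hε.1
    have hmain : ε * M / K * (Real.exp (K * (t - 0)) - 1)
        ≤ ε * (M / K * (Real.exp (K * T) - 1)) := by
      rw [mul_div_assoc]
      have hMK : 0 ≤ M / K := div_nonneg hMpos hKpos.le
      calc ε * (M / K) * (Real.exp (K * (t - 0)) - 1)
          ≤ ε * (M / K) * (Real.exp (K * T) - 1) := by gcongr <;> nlinarith
        _ = ε * (M / K * (Real.exp (K * T) - 1)) := by ring
    simp only [zero_mul, zero_add]
    nlinarith
  -- the compact tube around the nominal trajectory
  obtain ⟨Tb, hTbcomp, hball⟩ : ∃ Tb : Set (EuclideanSpace ℝ (Fin n)), IsCompact Tb ∧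
      ∀ t ∈ Set.Icc (0:ℝ) T, Metric.closedBall (xbar t) C ⊆ Tb := by
    refine ⟨(xbar '' Set.Icc 0 T) + Metric.closedBall 0 C,
      (isCompact_Icc.image_of_continuousOn hxbarC).add (isCompact_closedBall 0 C), ?_⟩
    intro t ht y hy
    refine Set.mem_add.2 ⟨xbar t, Set.mem_image_of_mem _ ht, y - xbar t, ?_, by abel⟩
    simpa [Metric.mem_closedBall, dist_zero_right, ← dist_eq_norm] using hy
  -- second-order Taylor remainder bound for g on the tube
  have hfdg1 : ContDiff ℝ 1 (fderiv ℝ g) := hg.fderiv_right (by norm_num)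
  obtain ⟨B, hBpos, hgrem⟩ : ∃ B : ℝ, 0 ≤ B ∧ ∀ t ∈ Set.Icc (0:ℝ) T, ∀ ρ : ℝ, 0 ≤ ρ → ρ ≤ C →
      ∀ y ∈ Metric.closedBall (xbar t) ρ,
      ‖g y - g (xbar t) - fderiv ℝ g (xbar t) (y - xbar t)‖ ≤ B * ρ * ‖y - xbar t‖ := by
    obtain ⟨B0, hB0⟩ := hTbcomp.exists_bound_of_continuousOn
      ((hfdg1.continuous_fderiv one_ne_zero).continuousOn)
    refine ⟨max B0 0, le_max_right _ _, ?_⟩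
    intro t ht ρ hρ0 hρC y hy
    have hLip : ∀ z ∈ Metric.closedBall (xbar t) C,
        ‖fderiv ℝ g z - fderiv ℝ g (xbar t)‖ ≤ max B0 0 * ‖z - xbar t‖ :=
      fun z hz => (convex_closedBall _ _).norm_image_sub_le_of_norm_fderiv_le
        (fun w _ => (hfdg1.differentiable one_ne_zero).differentiableAt)
        (fun w hw => ((hB0 _ (hball t ht hw)).trans (le_max_left _ _)))
        (Metric.mem_closedBall_self hCpos.le) hz
    refine (convex_closedBall _ _).norm_image_sub_le_of_norm_fderiv_le'
      (fun w _ => (hg.differentiable two_ne_zero).differentiableAt)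
      (fun w hw => ?_) (Metric.mem_closedBall_self hρ0) hy
    have hw' : w ∈ Metric.closedBall (xbar t) C :=
      Metric.closedBall_subset_closedBall hρC hw
    have hwn : ‖w - xbar t‖ ≤ ρ := by rw [← dist_eq_norm]; exact hw
    exact (hLip w hw').trans (mul_le_mul_of_nonneg_left hwn (le_max_right _ _))
  -- uniform first-order remainder for rg on the tube
  have hrgrem : ∀ η : ℝ, 0 < η → ∃ δ : ℝ, 0 < δ ∧ δ ≤ C ∧
      ∀ t ∈ Set.Icc (0:ℝ) T, ∀ y ∈ Metric.closedBall (xbar t) δ,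
      ‖rg y - rg (xbar t) - fderiv ℝ rg (xbar t) (y - xbar t)‖ ≤ η * ‖y - xbar t‖ := by
    intro η hη
    obtain ⟨δ0, hδ0, hδ⟩ := Metric.uniformContinuousOn_iff_le.1
      (hTbcomp.uniformContinuousOn_of_continuous
        ((hrg.continuous_fderiv one_ne_zero).continuousOn)) η hη
    refine ⟨min δ0 C, lt_min hδ0 hCpos, min_le_right _ _, ?_⟩
    intro t ht y hy
    refine (convex_closedBall _ _).norm_image_sub_le_of_norm_fderiv_le'
      (fun w _ => (hrg.differentiable one_ne_zero).differentiableAt)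
      (fun w hw => ?_)
      (Metric.mem_closedBall_self (le_min hδ0.le hCpos.le)) hy
    have hwT : w ∈ Tb := hball t ht
      (Metric.closedBall_subset_closedBall (min_le_right _ _) hw)
    have hxT : xbar t ∈ Tb := hball t ht (Metric.mem_closedBall_self hCpos.le)
    have := hδ w hwT (xbar t) hxT ((Metric.mem_closedBall.1 hw).trans (min_le_left _ _))
    simpa [dist_eq_norm] using this
  -- Lipschitz bound for rh - rg near the trajectory
  obtain ⟨Lr, hLrnn, hrdiff⟩ : ∃ Lr : ℝ, 0 ≤ Lr ∧ ∀ t ∈ Set.Icc (0:ℝ) T,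
      ∀ y ∈ Metric.closedBall (xbar t) C,
      ‖(rh y - rg y) - (rh (xbar t) - rg (xbar t))‖ ≤ Lr * ‖y - xbar t‖ := by
    obtain ⟨L1, hL1⟩ := hTbcomp.exists_bound_of_continuousOn
      ((hrh.continuous_fderiv one_ne_zero).continuousOn)
    obtain ⟨L2, hL2⟩ := hTbcomp.exists_bound_of_continuousOn
      ((hrg.continuous_fderiv one_ne_zero).continuousOn)
    refine ⟨max L1 0 + max L2 0, by positivity, ?_⟩
    intro t ht y hy
    refine (convex_closedBall _ _).norm_image_sub_le_of_norm_fderiv_le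
      (f := fun z => rh z - rg z)
      (fun w _ => ((hrh.differentiable one_ne_zero).differentiableAt).sub
        ((hrg.differentiable one_ne_zero).differentiableAt))
      (fun w hw => ?_) (Metric.mem_closedBall_self hCpos.le) hy
    rw [fderiv_fun_sub ((hrh.differentiable one_ne_zero).differentiableAt)
      ((hrg.differentiable one_ne_zero).differentiableAt)]
    refine (norm_sub_le _ _).trans (add_le_add
      ((hL1 _ (hball t ht hw)).trans (le_max_left _ _))
      ((hL2 _ (hball t ht hw)).trans (le_max_left _ _)))
  -- bound for the adjoint state
  obtain ⟨Lam, hLamnn, hLam⟩ : ∃ L : ℝ, 0 ≤ L ∧ ∀ t ∈ Set.Icc (0:ℝ) T, ‖lam t‖ ≤ L := by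
    obtain ⟨L0, hL0⟩ := isCompact_Icc.exists_bound_of_continuousOn hlamC
    exact ⟨max L0 0, le_max_right _ _, fun t ht => (hL0 t ht).trans (le_max_left _ _)⟩
  -- first-order remainder for q at xbar T
  have hqrem : ∀ η : ℝ, 0 < η → ∃ δ : ℝ, 0 < δ ∧ ∀ y : EuclideanSpace ℝ (Fin n),
      ‖y - xbar T‖ < δ →
      ‖q y - q (xbar T) - fderiv ℝ q (xbar T) (y - xbar T)‖ ≤ η * ‖y - xbar T‖ := by
    intro η hη
    have hqd : HasFDerivAt q (fderiv ℝ q (xbar T)) (xbar T) :=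
      ((hq.differentiable one_ne_zero) (xbar T)).hasFDerivAt
    have hev := hqd.isLittleO.bound hη
    rw [Metric.eventually_nhds_iff] at hev
    obtain ⟨δ, hδ, hδ'⟩ := hev
    refine ⟨δ, hδ, fun y hy => ?_⟩
    have := hδ' (show dist y (xbar T) < δ by rwa [dist_eq_norm])
    simpa using this
  -- continuity and integrability of the target integrand
  have hiC : ContinuousOn (fun t => ⟪h (xbar t) - g (xbar t), lam t⟫
      + (rh (xbar t) - rg (xbar t))) (Set.Icc 0 T) :=
    (((hh.continuous.comp_continuousOn hxbarC).sub
      (hg.continuous.comp_continuousOn hxbarC)).inner hlamC).add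
      ((hrh.continuous.comp_continuousOn hxbarC).sub (hrg.continuous.comp_continuousOn hxbarC))
  have hiInt : IntervalIntegrable (fun t => ⟪h (xbar t) - g (xbar t), lam t⟫
      + (rh (xbar t) - rg (xbar t))) MeasureTheory.volume 0 T :=
    (hiC.mono (by rw [huIcc])).intervalIntegrable
  have hrgxInt : IntervalIntegrable (fun t => rg (xbar t)) MeasureTheory.volume 0 T :=
    (((hrg.continuous.comp_continuousOn hxbarC)).mono (by rw [huIcc])).intervalIntegrable
  -- continuity pieces for the adjoint equation right-hand side
  have hfdgC : Continuous (fderiv ℝ g) := hfdg1.continuous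
  have hc2 : ContinuousOn (fun t =>
      ContinuousLinearMap.adjoint (fderiv ℝ g (xbar t)) (lam t)) (Set.Icc 0 T) :=
    (ContinuousLinearMap.adjoint.continuous.comp_continuousOn
      (hfdgC.comp_continuousOn hxbarC)).clm_apply hlamC
  have hc4 : ContinuousOn (fun t => gradient rg (xbar t)) (Set.Icc 0 T) := by
    have hcg : Continuous fun z => gradient rg z := by
      show Continuous fun z => (InnerProductSpace.toDual ℝ _).symm (fderiv ℝ rg z)
      exact (InnerProductSpace.toDual ℝ _).symm.continuous.comp
        (hrg.continuous_fderiv one_ne_zero)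
    exact hcg.comp_continuousOn hxbarC
  -- the main quantitative estimate
  have main : ∀ η : ℝ, 0 < η → ∃ δ : ℝ, 0 < δ ∧ ∀ ε : ℝ, 0 < ε → ε < δ →
      |(Jeps ε - J0) / ε - (∫ t in (0:ℝ)..T,
        (⟪h (xbar t) - g (xbar t), lam t⟫ + (rh (xbar t) - rg (xbar t))))| < η := by
    intro η hη
    set η₀ : ℝ := η / (4 * (C * (T + 1))) with hη₀def
    have hη₀ : 0 < η₀ := by
      rw [hη₀def]
      exact div_pos hη (by nlinarith)
    clear_value η₀
    obtain ⟨δ₁, hδ₁pos, hδ₁C, Hrg⟩ := hrgrem η₀ hη₀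
    obtain ⟨δ₂, hδ₂pos, Hq⟩ := hqrem η₀ hη₀
    set A₀ : ℝ := Lam * (B * C * C + ((Kg:ℝ) + (Kh:ℝ)) * C) + Lr * C with hA₀def
    have hA₀nn : 0 ≤ A₀ := by
      rw [hA₀def]
      have h1 : (0:ℝ) ≤ (Kg:ℝ) + (Kh:ℝ) := by positivity
      have := hCpos.le
      nlinarith [mul_nonneg hBpos this, mul_nonneg (mul_nonneg hBpos this) this,
        mul_nonneg h1 this, mul_nonneg hLrnn this,
        mul_nonneg hLamnn (add_nonneg (mul_nonneg (mul_nonneg hBpos this) this) (mul_nonneg h1 this))]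
    clear_value A₀
    have hδpos : 0 < min (min (δ₁ / C) (δ₂ / C)) (min 1 (η / (2 * (A₀ * T + 1)))) := by
      refine lt_min (lt_min (div_pos hδ₁pos hCpos) (div_pos hδ₂pos hCpos))
        (lt_min one_pos (div_pos hη (by nlinarith)))
    refine ⟨_, hδpos, ?_⟩
    intro ε hε0 hεδ
    have hε1 : ε ≤ 1 :=
      le_of_lt (lt_of_lt_of_le hεδ ((min_le_right _ _).trans (min_le_left _ _)))
    have hεIoc : ε ∈ Set.Ioc (0:ℝ) 1 := ⟨hε0, hε1⟩
    have hεC1 : ε * C ≤ δ₁ := by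
      have hlt : ε < δ₁ / C := lt_of_lt_of_le hεδ ((min_le_left _ _).trans (min_le_left _ _))
      have := (lt_div_iff₀ hCpos).1 hlt
      linarith
    have hεC2 : ε * C < δ₂ := by
      have hlt : ε < δ₂ / C := lt_of_lt_of_le hεδ ((min_le_left _ _).trans (min_le_right _ _))
      exact (lt_div_iff₀ hCpos).1 hlt
    have hεA : ε < η / (2 * (A₀ * T + 1)) :=
      lt_of_lt_of_le hεδ ((min_le_right _ _).trans (min_le_right _ _))
    have hεCle : ε * C ≤ C := by nlinarith
    set Fε : ℝ → ℝ := fun t =>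
      (((1 - ε) * rg (X ε t) + ε * rh (X ε t)) - rg (xbar t))
      + (⟪X ε t - xbar t,
          -(ContinuousLinearMap.adjoint (fderiv ℝ g (xbar t)) (lam t)) - gradient rg (xbar t)⟫
        + ⟪((1 - ε) • g (X ε t) + ε • h (X ε t)) - g (xbar t), lam t⟫)
      - ε * (⟪h (xbar t) - g (xbar t), lam t⟫ + (rh (xbar t) - rg (xbar t))) with hFεdef
    -- pointwise bound on Fε
    have hpt : ∀ t ∈ Set.Icc (0:ℝ) T, |Fε t| ≤ A₀ * ε ^ 2 + η₀ * C * ε := by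
      intro t ht
      have hd : ‖X ε t - xbar t‖ ≤ ε * C := key ε hεIoc t ht
      have hyρ : X ε t ∈ Metric.closedBall (xbar t) (ε * C) := by
        rw [Metric.mem_closedBall, dist_eq_norm]; exact hd
      have hgr := hgrem t ht (ε * C) (mul_nonneg hε0.le hCpos.le) hεCle _ hyρ
      have hhg : ‖(h (X ε t) - g (X ε t)) - (h (xbar t) - g (xbar t))‖
          ≤ ((Kg:ℝ) + (Kh:ℝ)) * ‖X ε t - xbar t‖ := by
        have e : (h (X ε t) - g (X ε t)) - (h (xbar t) - g (xbar t))
            = (h (X ε t) - h (xbar t)) - (g (X ε t) - g (xbar t)) := by abel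
        rw [e]
        have h1 : ‖g (X ε t) - g (xbar t)‖ ≤ (Kg : ℝ) * ‖X ε t - xbar t‖ := by
          simpa [dist_eq_norm] using hgLip.dist_le_mul (X ε t) (xbar t)
        have h2 : ‖h (X ε t) - h (xbar t)‖ ≤ (Kh : ℝ) * ‖X ε t - xbar t‖ := by
          simpa [dist_eq_norm] using hhLip.dist_le_mul (X ε t) (xbar t)
        refine (norm_sub_le _ _).trans (by linarith)
      have hrg' := Hrg t ht (X ε t)
        (by rw [Metric.mem_closedBall, dist_eq_norm]; exact hd.trans hεC1)
      have hrd := hrdiff t ht (X ε t)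
        (by rw [Metric.mem_closedBall, dist_eq_norm]; exact hd.trans hεCle)
      have hlamb := hLam t ht
      have hid : Fε t = ⟪(g (X ε t) - g (xbar t) - fderiv ℝ g (xbar t) (X ε t - xbar t))
            + ε • ((h (X ε t) - g (X ε t)) - (h (xbar t) - g (xbar t))), lam t⟫
          + ((rg (X ε t) - rg (xbar t) - (fderiv ℝ rg (xbar t)) (X ε t - xbar t))
            + ε * ((rh (X ε t) - rg (X ε t)) - (rh (xbar t) - rg (xbar t)))) := by
        simp only [hFεdef]
        have e1 : ⟪X ε t - xbar t, ContinuousLinearMap.adjoint (fderiv ℝ g (xbar t)) (lam t)⟫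
            = ⟪fderiv ℝ g (xbar t) (X ε t - xbar t), lam t⟫ := by
          rw [real_inner_comm, ContinuousLinearMap.adjoint_inner_left, real_inner_comm]
        have e2 : ⟪X ε t - xbar t, gradient rg (xbar t)⟫
            = fderiv ℝ rg (xbar t) (X ε t - xbar t) := by
          rw [real_inner_comm]; exact InnerProductSpace.toDual_symm_apply
        simp only [inner_sub_right, inner_neg_right, inner_sub_left, inner_add_left,
          real_inner_smul_left, e1, e2]
        ring
      rw [hid]
      have hv : ‖(g (X ε t) - g (xbar t) - fderiv ℝ g (xbar t) (X ε t - xbar t))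
            + ε • ((h (X ε t) - g (X ε t)) - (h (xbar t) - g (xbar t)))‖
          ≤ B * (ε * C) * (ε * C) + ε * (((Kg:ℝ) + (Kh:ℝ)) * (ε * C)) := by
        refine (norm_add_le _ _).trans ?_
        have t1 : B * (ε * C) * ‖X ε t - xbar t‖ ≤ B * (ε * C) * (ε * C) :=
          mul_le_mul_of_nonneg_left hd (mul_nonneg hBpos (mul_nonneg hε0.le hCpos.le))
        have t2 : ‖ε • ((h (X ε t) - g (X ε t)) - (h (xbar t) - g (xbar t)))‖
            ≤ ε * (((Kg:ℝ) + (Kh:ℝ)) * (ε * C)) := by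
          rw [norm_smul, Real.norm_eq_abs, abs_of_pos hε0]
          refine mul_le_mul_of_nonneg_left (hhg.trans ?_) hε0.le
          exact mul_le_mul_of_nonneg_left hd (by positivity)
        linarith [hgr.trans t1]
      have habs1 : |⟪(g (X ε t) - g (xbar t) - fderiv ℝ g (xbar t) (X ε t - xbar t))
            + ε • ((h (X ε t) - g (X ε t)) - (h (xbar t) - g (xbar t))), lam t⟫|
          ≤ (B * (ε * C) * (ε * C) + ε * (((Kg:ℝ) + (Kh:ℝ)) * (ε * C))) * Lam :=
        (abs_real_inner_le_norm _ _).trans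
          (mul_le_mul hv hlamb (norm_nonneg _) ((norm_nonneg _).trans hv))
      have habs2 : |(rg (X ε t) - rg (xbar t) - (fderiv ℝ rg (xbar t)) (X ε t - xbar t))
            + ε * ((rh (X ε t) - rg (X ε t)) - (rh (xbar t) - rg (xbar t)))|
          ≤ η₀ * (ε * C) + ε * (Lr * (ε * C)) := by
        refine (abs_add_le _ _).trans (add_le_add ?_ ?_)
        · rw [← Real.norm_eq_abs]
          exact hrg'.trans (mul_le_mul_of_nonneg_left hd hη₀.le)
        · rw [abs_mul, abs_of_pos hε0]
          refine mul_le_mul_of_nonneg_left ?_ hε0.le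
          rw [← Real.norm_eq_abs]
          exact hrd.trans (mul_le_mul_of_nonneg_left hd hLrnn)
      have hfin : (B * (ε * C) * (ε * C) + ε * (((Kg:ℝ) + (Kh:ℝ)) * (ε * C))) * Lam
          + (η₀ * (ε * C) + ε * (Lr * (ε * C))) = A₀ * ε ^ 2 + η₀ * C * ε := by
        rw [hA₀def]; ring
      refine (abs_add_le _ _).trans ?_
      linarith
    -- integrability of the pieces for this ε
    have hXCe := hXC ε hεIoc
    have horigInt : IntervalIntegrable (fun t => (1 - ε) * rg (X ε t) + ε * rh (X ε t))
        MeasureTheory.volume 0 T := by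
      apply ContinuousOn.intervalIntegrable
      rw [huIcc]
      exact (continuousOn_const.mul (hrg.continuous.comp_continuousOn hXCe)).add
        (continuousOn_const.mul (hrh.continuous.comp_continuousOn hXCe))
    have hRfInt : IntervalIntegrable
        (fun t => ((1 - ε) * rg (X ε t) + ε * rh (X ε t)) - rg (xbar t))
        MeasureTheory.volume 0 T := horigInt.sub hrgxInt
    have hψdC : ContinuousOn (fun t => ⟪X ε t - xbar t,
          -(ContinuousLinearMap.adjoint (fderiv ℝ g (xbar t)) (lam t)) - gradient rg (xbar t)⟫
        + ⟪((1 - ε) • g (X ε t) + ε • h (X ε t)) - g (xbar t), lam t⟫) (Set.Icc 0 T) := by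
      refine ContinuousOn.add (((hXCe.sub hxbarC)).inner (hc2.neg.sub hc4))
        (ContinuousOn.inner ?_ hlamC)
      exact (((continuousOn_const (c := (1 - ε))).smul (hg.continuous.comp_continuousOn hXCe)).add
        ((continuousOn_const (c := ε)).smul (hh.continuous.comp_continuousOn hXCe))).sub
        (hg.continuous.comp_continuousOn hxbarC)
    have hψdInt : IntervalIntegrable (fun t => ⟪X ε t - xbar t,
          -(ContinuousLinearMap.adjoint (fderiv ℝ g (xbar t)) (lam t)) - gradient rg (xbar t)⟫
        + ⟪((1 - ε) • g (X ε t) + ε • h (X ε t)) - g (xbar t), lam t⟫)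
        MeasureTheory.volume 0 T :=
      (hψdC.mono (by rw [huIcc])).intervalIntegrable
    have hsum : IntervalIntegrable (fun t =>
        (((1 - ε) * rg (X ε t) + ε * rh (X ε t)) - rg (xbar t))
        + (⟪X ε t - xbar t,
            -(ContinuousLinearMap.adjoint (fderiv ℝ g (xbar t)) (lam t)) - gradient rg (xbar t)⟫
          + ⟪((1 - ε) • g (X ε t) + ε • h (X ε t)) - g (xbar t), lam t⟫))
        MeasureTheory.volume 0 T := hRfInt.add hψdInt
    have hεi : IntervalIntegrable (fun t =>
        ε * (⟪h (xbar t) - g (xbar t), lam t⟫ + (rh (xbar t) - rg (xbar t))))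
        MeasureTheory.volume 0 T := hiInt.const_mul ε
    have hFTC : (∫ t in (0:ℝ)..T, (⟪X ε t - xbar t,
          -(ContinuousLinearMap.adjoint (fderiv ℝ g (xbar t)) (lam t)) - gradient rg (xbar t)⟫
        + ⟪((1 - ε) • g (X ε t) + ε • h (X ε t)) - g (xbar t), lam t⟫))
        = ⟪X ε T - xbar T, lam T⟫ := by
      rw [intervalIntegral.integral_eq_sub_of_hasDerivAt
        (f := fun t => ⟪X ε t - xbar t, lam t⟫)
        (fun t ht => HasDerivAt.inner ℝ
          ((hXode ε hεIoc t (huIcc ▸ ht)).sub (hxbar t (huIcc ▸ ht)))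
          (hlam t (huIcc ▸ ht))) hψdInt]
      simp [hX0 ε hεIoc, hx0]
    have hsplit : (∫ t in (0:ℝ)..T, Fε t)
        = ((∫ t in (0:ℝ)..T, ((1 - ε) * rg (X ε t) + ε * rh (X ε t)))
            - ∫ t in (0:ℝ)..T, rg (xbar t))
          + ⟪X ε T - xbar T, lam T⟫
          - ε * ∫ t in (0:ℝ)..T,
              (⟪h (xbar t) - g (xbar t), lam t⟫ + (rh (xbar t) - rg (xbar t))) := by
      simp only [hFεdef]
      rw [intervalIntegral.integral_sub hsum hεi,
        intervalIntegral.integral_add hRfInt hψdInt,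
        intervalIntegral.integral_sub horigInt hrgxInt,
        intervalIntegral.integral_const_mul, hFTC]
    -- the q-remainder
    have hdT : ‖X ε T - xbar T‖ ≤ ε * C := key ε hεIoc T (Set.right_mem_Icc.2 hT.le)
    have hψT : ⟪X ε T - xbar T, lam T⟫ = fderiv ℝ q (xbar T) (X ε T - xbar T) := by
      rw [hlamT, real_inner_comm]; exact InnerProductSpace.toDual_symm_apply
    have hqb : |q (X ε T) - q (xbar T) - ⟪X ε T - xbar T, lam T⟫| ≤ η₀ * (ε * C) := by
      rw [hψT, ← Real.norm_eq_abs]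
      exact (Hq (X ε T) (lt_of_le_of_lt hdT hεC2)).trans
        (mul_le_mul_of_nonneg_left hdT hη₀.le)
    -- bound the integral of Fε
    have hIb : |∫ t in (0:ℝ)..T, Fε t| ≤ (A₀ * ε ^ 2 + η₀ * C * ε) * T := by
      have hb := intervalIntegral.norm_integral_le_of_norm_le_const
        (C := A₀ * ε ^ 2 + η₀ * C * ε) (f := Fε) (a := (0:ℝ)) (b := T)
        (fun x hx => by
          have hx' : x ∈ Set.Icc (0:ℝ) T := by
            rw [Set.uIoc_of_le hT.le] at hx
            exact Set.Ioc_subset_Icc_self hx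
          rw [Real.norm_eq_abs]
          exact hpt x hx')
      rw [Real.norm_eq_abs] at hb
      refine hb.trans ?_
      rw [sub_zero, abs_of_pos hT]
    -- assemble the difference identity
    have hJdiff : Jeps ε - J0 - ε * (∫ t in (0:ℝ)..T,
          (⟪h (xbar t) - g (xbar t), lam t⟫ + (rh (xbar t) - rg (xbar t))))
        = (∫ t in (0:ℝ)..T, Fε t)
          + (q (X ε T) - q (xbar T) - ⟪X ε T - xbar T, lam T⟫) := by
      rw [hsplit, hJeps ε hεIoc, hJ0]; ring
    have habs : |Jeps ε - J0 - ε * (∫ t in (0:ℝ)..T,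
          (⟪h (xbar t) - g (xbar t), lam t⟫ + (rh (xbar t) - rg (xbar t))))|
        ≤ (A₀ * ε ^ 2 + η₀ * C * ε) * T + η₀ * (ε * C) := by
      rw [hJdiff]
      exact (abs_add_le _ _).trans (add_le_add hIb hqb)
    -- final arithmetic
    have heq : (Jeps ε - J0) / ε - (∫ t in (0:ℝ)..T,
          (⟪h (xbar t) - g (xbar t), lam t⟫ + (rh (xbar t) - rg (xbar t))))
        = (Jeps ε - J0 - ε * (∫ t in (0:ℝ)..T,
          (⟪h (xbar t) - g (xbar t), lam t⟫ + (rh (xbar t) - rg (xbar t))))) / ε := by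
      field_simp
    rw [heq, abs_div, abs_of_pos hε0, div_lt_iff₀ hε0]
    have e1 : η₀ * C * ε * T + η₀ * (ε * C) = η / 4 * ε := by
      rw [hη₀def]
      field_simp
    have h2' : (A₀ * T + 1) * ε < η / 2 := by
      have hden : (0:ℝ) < 2 * (A₀ * T + 1) := by nlinarith
      have := (lt_div_iff₀ hden).1 hεA
      nlinarith
    have e2 : A₀ * ε ^ 2 * T < η / 2 * ε := by
      nlinarith [mul_lt_mul_of_pos_right h2' hε0, sq_nonneg ε, mul_nonneg hA₀nn hε0.le]
    have expand : (A₀ * ε ^ 2 + η₀ * C * ε) * T + η₀ * (ε * C)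
        = A₀ * ε ^ 2 * T + (η₀ * C * ε * T + η₀ * (ε * C)) := by ring
    have hηε : 0 < η * ε := mul_pos hη hε0
    rw [expand, e1] at habs
    calc |Jeps ε - J0 - ε * (∫ t in (0:ℝ)..T,
          (⟪h (xbar t) - g (xbar t), lam t⟫ + (rh (xbar t) - rg (xbar t))))|
        ≤ A₀ * ε ^ 2 * T + η / 4 * ε := habs
      _ < η * ε := by linarith
  -- conclude
  rw [Metric.tendsto_nhdsWithin_nhds]
  intro η hη
  obtain ⟨δ, hδpos, H⟩ := main η hη
  refine ⟨δ, hδpos, fun ε hεIoi hd => ?_⟩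
  have hε0 : (0:ℝ) < ε := hεIoi
  rw [Real.dist_eq, sub_zero, abs_of_pos hε0] at hd
  rw [Real.dist_eq]
  exact H ε hε0 hd
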